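/- Let x, y, φ solve the Dubins system ẋ = cos φ, ẏ = sin φ, φ̇ = u with initial condition (0, 0, π/2) and control u(t) = s for t ∈ [0, τ₁), u(t) = −s for t ∈ [τ₁, τ₂), u(t) = s for t ≥ τ₂, where s ∈ {−1, 1} and 0 ≤ τ₁ ≤ τ₂ ≤ t. Then x(t) = s(2 cos τ₁ − 1 − 2 cos(2τ₁ − τ₂) + cos(2τ₁ − 2τ₂ + t)), y(t) = 2 sin τ₁ − 2 sin(2τ₁ − τ₂) + sin(2τ₁ − 2τ₂ + t), and φ(t) = π/2 + s(2τ₁ − 2τ₂ + t). -/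

import Mathlib

open Set Real

lemma my_integ {f g d : ℝ → ℝ} {a b : ℝ} (hab : a ≤ b)
    (hfc : ContinuousOn f (Icc a b))
    (hf : ∀ t ∈ Ioo a b, HasDerivAt f (d t) t)
    (hg : ∀ t, HasDerivAt g (d t) t) : f b = f a + (g b - g a) := by
  rcases eq_or_lt_of_le hab with rfl | h
  · ring
  · have hgC : Continuous g := by
      rw [continuous_iff_continuousAt]; exact fun t => (hg t).differentiableAt.continuousAt
    have hFc : ContinuousOn (fun t => f t - g t) (Icc a b) := hfc.sub hgC.continuousOn
    have hFd : ∀ t ∈ Ioo a b, HasDerivAt (fun t => f t - g t) 0 t := fun t ht => by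
      have h' := (hf t ht).sub (hg t); rw [sub_self] at h'; exact h'
    obtain ⟨c, _, hc⟩ := exists_hasDerivAt_eq_slope (fun t => f t - g t) (fun _ => 0) h hFc hFd
    have : f b - g b - (f a - g a) = 0 := by
      have hba : b - a ≠ 0 := sub_ne_zero.mpr h.ne'
      field_simp at hc
      linarith [hc]
    linarith

lemma hasDerivAt_cos_aff (c k u : ℝ) :
    HasDerivAt (fun t => Real.cos (c + k * t)) (-Real.sin (c + k * u) * k) u := by
  have h1 : HasDerivAt (fun t : ℝ => c + k * t) k u := by
    simpa using ((hasDerivAt_id u).const_mul k).const_add c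
  exact (Real.hasDerivAt_cos (c + k * u)).comp u h1

lemma hasDerivAt_sin_aff (c k u : ℝ) :
    HasDerivAt (fun t => Real.sin (c + k * t)) (Real.cos (c + k * u) * k) u := by
  have h1 : HasDerivAt (fun t : ℝ => c + k * t) k u := by
    simpa using ((hasDerivAt_id u).const_mul k).const_add c
  exact (Real.hasDerivAt_sin (c + k * u)).comp u h1

theorem dubins_CCC_integration (s τ₁ τ₂ T : ℝ)
    (hs : s = 1 ∨ s = -1)
    (h0 : 0 ≤ τ₁) (h1 : τ₁ ≤ τ₂) (h2 : τ₂ ≤ T)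
    (x y φ : ℝ → ℝ)
    (hx0 : x 0 = 0) (hy0 : y 0 = 0) (hφ0 : φ 0 = π / 2)
    (hxc : ContinuousOn x (Icc 0 T)) (hyc : ContinuousOn y (Icc 0 T))
    (hφc : ContinuousOn φ (Icc 0 T))
    (hx : ∀ t ∈ Ioo 0 τ₁ ∪ Ioo τ₁ τ₂ ∪ Ioo τ₂ T, HasDerivAt x (Real.cos (φ t)) t)
    (hy : ∀ t ∈ Ioo 0 τ₁ ∪ Ioo τ₁ τ₂ ∪ Ioo τ₂ T, HasDerivAt y (Real.sin (φ t)) t)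
    (hφ1 : ∀ t ∈ Ioo 0 τ₁, HasDerivAt φ s t)
    (hφ2 : ∀ t ∈ Ioo τ₁ τ₂, HasDerivAt φ (-s) t)
    (hφ3 : ∀ t ∈ Ioo τ₂ T, HasDerivAt φ s t) :
    x T = s * (2 * Real.cos τ₁ - 1 - 2 * Real.cos (2 * τ₁ - τ₂)
        + Real.cos (2 * τ₁ - 2 * τ₂ + T)) ∧
    y T = 2 * Real.sin τ₁ - 2 * Real.sin (2 * τ₁ - τ₂)
        + Real.sin (2 * τ₁ - 2 * τ₂ + T) ∧
    φ T = π / 2 + s * (2 * τ₁ - 2 * τ₂ + T) := by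
  have hsin : ∀ a : ℝ, Real.sin (s * a) = s * Real.sin a := by
    rcases hs with rfl | rfl <;> simp
  have hcos : ∀ a : ℝ, Real.cos (s * a) = Real.cos a := by
    rcases hs with rfl | rfl <;> simp
  -- φ on [0, τ₁]
  have hφI1 : ∀ t ∈ Icc 0 τ₁, φ t = π / 2 + s * t := by
    intro t ht
    have key := my_integ (g := fun u => s * u) (d := fun _ => s) ht.1
      (hφc.mono (Icc_subset_Icc le_rfl (ht.2.trans (h1.trans h2))))
      (fun u hu => hφ1 u ⟨hu.1, hu.2.trans_le ht.2⟩)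
      (fun u => by simpa using (hasDerivAt_id u).const_mul s)
    rw [hφ0] at key; rw [key]; ring
  -- φ on [τ₁, τ₂]
  have hφI2 : ∀ t ∈ Icc τ₁ τ₂, φ t = π / 2 + s * (2 * τ₁ - t) := by
    intro t ht
    have key := my_integ (g := fun u => -s * u) (d := fun _ => -s) ht.1
      (hφc.mono (Icc_subset_Icc h0 (ht.2.trans h2)))
      (fun u hu => hφ2 u ⟨hu.1, hu.2.trans_le ht.2⟩)
      (fun u => by simpa using (hasDerivAt_id u).const_mul (-s))
    rw [hφI1 τ₁ ⟨h0, le_rfl⟩] at key; rw [key]; ring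
  -- φ on [τ₂, T]
  have hφI3 : ∀ t ∈ Icc τ₂ T, φ t = π / 2 + s * (2 * τ₁ - 2 * τ₂ + t) := by
    intro t ht
    have key := my_integ (g := fun u => s * u) (d := fun _ => s) ht.1
      (hφc.mono (Icc_subset_Icc (h0.trans h1) ht.2))
      (fun u hu => hφ3 u ⟨hu.1, hu.2.trans_le ht.2⟩)
      (fun u => by simpa using (hasDerivAt_id u).const_mul s)
    rw [hφI2 τ₂ ⟨h1, le_rfl⟩] at key; rw [key]; ring
  -- x, segment 1
  have hx1 : x τ₁ = x 0 + (s * Real.cos (0 + 1 * τ₁) - s * Real.cos (0 + 1 * 0)) := by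
    apply my_integ (d := fun t => s * (-Real.sin (0 + 1 * t) * 1)) h0
      (hxc.mono (Icc_subset_Icc le_rfl (h1.trans h2)))
    · intro t ht
      have h := hx t (Or.inl (Or.inl ht))
      rw [hφI1 t ⟨ht.1.le, ht.2.le⟩] at h
      have e : Real.cos (π / 2 + s * t) = s * (-Real.sin (0 + 1 * t) * 1) := by
        rw [Real.cos_add, Real.cos_pi_div_two, Real.sin_pi_div_two, hsin]; ring_nf
      rwa [e] at h
    · intro u; exact (hasDerivAt_cos_aff 0 1 u).const_mul s
  -- x, segment 2
  have hx2 : x τ₂ = x τ₁ + (-s * Real.cos (2 * τ₁ + (-1) * τ₂)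
      - -s * Real.cos (2 * τ₁ + (-1) * τ₁)) := by
    apply my_integ (d := fun t => -s * (-Real.sin (2 * τ₁ + (-1) * t) * (-1))) h1
      (hxc.mono (Icc_subset_Icc h0 h2))
    · intro t ht
      have h := hx t (Or.inl (Or.inr ht))
      rw [hφI2 t ⟨ht.1.le, ht.2.le⟩] at h
      have e : Real.cos (π / 2 + s * (2 * τ₁ - t))
          = -s * (-Real.sin (2 * τ₁ + (-1) * t) * (-1)) := by
        rw [Real.cos_add, Real.cos_pi_div_two, Real.sin_pi_div_two, hsin]; ring_nf
      rwa [e] at h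
    · intro u; exact (hasDerivAt_cos_aff (2 * τ₁) (-1) u).const_mul (-s)
  -- x, segment 3
  have hx3 : x T = x τ₂ + (s * Real.cos (2 * τ₁ - 2 * τ₂ + 1 * T)
      - s * Real.cos (2 * τ₁ - 2 * τ₂ + 1 * τ₂)) := by
    apply my_integ (d := fun t => s * (-Real.sin (2 * τ₁ - 2 * τ₂ + 1 * t) * 1)) h2
      (hxc.mono (Icc_subset_Icc (h0.trans h1) le_rfl))
    · intro t ht
      have h := hx t (Or.inr ht)
      rw [hφI3 t ⟨ht.1.le, ht.2.le⟩] at h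
      have e : Real.cos (π / 2 + s * (2 * τ₁ - 2 * τ₂ + t))
          = s * (-Real.sin (2 * τ₁ - 2 * τ₂ + 1 * t) * 1) := by
        rw [Real.cos_add, Real.cos_pi_div_two, Real.sin_pi_div_two, hsin]; ring_nf
      rwa [e] at h
    · intro u; exact (hasDerivAt_cos_aff (2 * τ₁ - 2 * τ₂) 1 u).const_mul s
  -- y, segment 1
  have hy1 : y τ₁ = y 0 + (Real.sin (0 + 1 * τ₁) - Real.sin (0 + 1 * 0)) := by
    apply my_integ (d := fun t => Real.cos (0 + 1 * t) * 1) h0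
      (hyc.mono (Icc_subset_Icc le_rfl (h1.trans h2)))
    · intro t ht
      have h := hy t (Or.inl (Or.inl ht))
      rw [hφI1 t ⟨ht.1.le, ht.2.le⟩] at h
      have e : Real.sin (π / 2 + s * t) = Real.cos (0 + 1 * t) * 1 := by
        rw [Real.sin_add, Real.cos_pi_div_two, Real.sin_pi_div_two, hcos]; ring_nf
      rwa [e] at h
    · intro u; exact hasDerivAt_sin_aff 0 1 u
  -- y, segment 2
  have hy2 : y τ₂ = y τ₁ + (-1 * Real.sin (2 * τ₁ + (-1) * τ₂)
      - -1 * Real.sin (2 * τ₁ + (-1) * τ₁)) := by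
    apply my_integ (d := fun t => -1 * (Real.cos (2 * τ₁ + (-1) * t) * (-1))) h1
      (hyc.mono (Icc_subset_Icc h0 h2))
    · intro t ht
      have h := hy t (Or.inl (Or.inr ht))
      rw [hφI2 t ⟨ht.1.le, ht.2.le⟩] at h
      have e : Real.sin (π / 2 + s * (2 * τ₁ - t))
          = -1 * (Real.cos (2 * τ₁ + (-1) * t) * (-1)) := by
        rw [Real.sin_add, Real.cos_pi_div_two, Real.sin_pi_div_two, hcos]; ring_nf
      rwa [e] at h
    · intro u; exact (hasDerivAt_sin_aff (2 * τ₁) (-1) u).const_mul (-1)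
  -- y, segment 3
  have hy3 : y T = y τ₂ + (Real.sin (2 * τ₁ - 2 * τ₂ + 1 * T)
      - Real.sin (2 * τ₁ - 2 * τ₂ + 1 * τ₂)) := by
    apply my_integ (d := fun t => Real.cos (2 * τ₁ - 2 * τ₂ + 1 * t) * 1) h2
      (hyc.mono (Icc_subset_Icc (h0.trans h1) le_rfl))
    · intro t ht
      have h := hy t (Or.inr ht)
      rw [hφI3 t ⟨ht.1.le, ht.2.le⟩] at h
      have e : Real.sin (π / 2 + s * (2 * τ₁ - 2 * τ₂ + t))
          = Real.cos (2 * τ₁ - 2 * τ₂ + 1 * t) * 1 := by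
        rw [Real.sin_add, Real.cos_pi_div_two, Real.sin_pi_div_two, hcos]; ring_nf
      rwa [e] at h
    · intro u; exact hasDerivAt_sin_aff (2 * τ₁ - 2 * τ₂) 1 u
  refine ⟨?_, ?_, ?_⟩
  · rw [hx3, hx2, hx1, hx0]; ring_nf; rw [Real.cos_zero]; ring
  · rw [hy3, hy2, hy1, hy0]; ring_nf; rw [Real.sin_zero]; ring
  · rw [hφI3 T ⟨h2, le_rfl⟩]
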